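/- (Point-to-plane distance (4.7), F₀₃ to the face with pole b⁰) Assume u = w and B < 0, and let f₀₃ = a₀ + a₃ and b⁰ = a₀ − cos(π/u)·a₁. Then ⟨f₀₃, b⁰⟩ = 1, ⟨b⁰, b⁰⟩ = 1, ⟨f₀₃, f₀₃⟩ = 2(a₀₀ + a₀₃) < 0, and 1 − 1/(2(a₀₀ + a₀₃)) = 1 + (cos(π/v) − sin²(π/u))/(2·(1 − cos(π/v))). (The left-hand side is cosh² of the hyperbolic distance from the point F₀₃ to the plane with pole b⁰, since sinh² of that distance equals ⟨f₀₃,b⁰⟩²/(−⟨f₀₃,f₀₃⟩·⟨b⁰,b⁰⟩).) -/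

import Mathlib

open Real Matrix
set_option maxHeartbeats 4000000

/-- The Coxeter–Schläfli matrix of the complete orthoscheme `W_{uvw}`. -/
noncomputable def CSmatrix (u v w : ℝ) : Matrix (Fin 4) (Fin 4) ℝ :=
  !![1, -cos (π/u), 0, 0;
     -cos (π/u), 1, -cos (π/v), 0;
     0, -cos (π/v), 1, -cos (π/w);
     0, 0, -cos (π/w), 1]

/-- The inverse of the Coxeter–Schläfli matrix; its entries are the `a_{ij}`. -/
noncomputable def CSinv (u v w : ℝ) : Matrix (Fin 4) (Fin 4) ℝ :=
  (CSmatrix u v w)⁻¹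

lemma auxId (c d : ℝ) (h1d : 1 - d ≠ 0) (h2 : 1 + d - c^2 ≠ 0) (hD0 : (1-c^2)^2 - d^2 ≠ 0) :
    1 - 1 / (2 * ((((1-c^2)^2 - d^2)⁻¹) * ((1-d)*(1+d-c^2)))) = 1 + (d - (1-c^2)) / (2*(1-d)) := by
  field_simp
  ring

theorem stmt16 (u v w : ℝ) (hu : 3 ≤ u) (hv : 3 ≤ v) (hw : 3 ≤ w)
    (hdet : (CSmatrix u v w).det ≠ 0)
    {V : Type*} [AddCommGroup V] [Module ℝ V]
    (Bf : LinearMap.BilinForm ℝ V)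
    (hsymm : ∀ x y : V, Bf x y = Bf y x)
    (a : Fin 4 → V)
    (hGram : ∀ i j : Fin 4, Bf (a i) (a j) = CSinv u v w i j)
    (huw : u = w) (hBneg : (CSmatrix u v w).det < 0)
    (f b0 : V) (hf : f = a 0 + a 3) (hb0 : b0 = a 0 - cos (π/u) • a 1) :
    Bf f b0 = 1 ∧ Bf b0 b0 = 1 ∧
    Bf f f = 2 * (CSinv u v w 0 0 + CSinv u v w 0 3) ∧
    2 * (CSinv u v w 0 0 + CSinv u v w 0 3) < 0 ∧
    1 - 1 / (2 * (CSinv u v w 0 0 + CSinv u v w 0 3)) =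
      1 + (cos (π/v) - sin (π/u) ^ 2) / (2 * (1 - cos (π/v))) := by
  have hw' : cos (π/w) = cos (π/u) := by rw [← huw]
  set c := cos (π/u) with hc
  set d := cos (π/v) with hd
  -- determinant
  have hDet : (CSmatrix u v w).det = (1 - c^2)^2 - d^2 := by
    simp [CSmatrix, hw', Matrix.det_succ_row_zero, Fin.sum_univ_succ,
      Fin.succAbove, hc, hd]
    ring
  set D := (1 - c^2)^2 - d^2 with hDdef
  have hD0 : D ≠ 0 := by rw [← hDet]; exact hdet
  have hDlt : D < 0 := by rw [← hDet]; exact hBneg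
  -- explicit inverse
  have hinv : CSinv u v w = D⁻¹ •
      !![1 - c^2 - d^2, c * (1 - c^2), c * d, c^2 * d;
         c * (1 - c^2), 1 - c^2, d, c * d;
         c * d, d, 1 - c^2, c * (1 - c^2);
         c^2 * d, c * d, c * (1 - c^2), 1 - c^2 - d^2] := by
    rw [CSinv]
    apply Matrix.inv_eq_right_inv
    ext i j
    fin_cases i <;> fin_cases j <;>
      simp [CSmatrix, hw', Matrix.mul_apply, Fin.sum_univ_four, Matrix.smul_apply,
        Matrix.one_apply, hc, hd] <;>
      field_simp <;> ring
  have h00 : CSinv u v w 0 0 = D⁻¹ * (1 - c^2 - d^2) := by rw [hinv]; simp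
  have h01 : CSinv u v w 0 1 = D⁻¹ * (c * (1 - c^2)) := by rw [hinv]; simp
  have h03 : CSinv u v w 0 3 = D⁻¹ * (c^2 * d) := by rw [hinv]; simp
  have h11 : CSinv u v w 1 1 = D⁻¹ * (1 - c^2) := by rw [hinv]; simp
  have h13 : CSinv u v w 1 3 = D⁻¹ * (c * d) := by rw [hinv]; simp
  have h30 : CSinv u v w 3 0 = D⁻¹ * (c^2 * d) := by rw [hinv]; simp
  have h31 : CSinv u v w 3 1 = D⁻¹ * (c * d) := by rw [hinv]; simp
  have h33 : CSinv u v w 3 3 = D⁻¹ * (1 - c^2 - d^2) := by rw [hinv]; simp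
  -- bounds on c, d
  have hπ : (0:ℝ) < π := Real.pi_pos
  have hu0 : (0:ℝ) < u := by linarith
  have hv0 : (0:ℝ) < v := by linarith
  have hcu : π / u ≤ π / 3 := by
    apply div_le_div_of_nonneg_left (le_of_lt hπ) (by norm_num) hu
  have hcv : π / v ≤ π / 3 := by
    apply div_le_div_of_nonneg_left (le_of_lt hπ) (by norm_num) hv
  have hu1 : 0 < π / u := div_pos hπ hu0
  have hv1 : 0 < π / v := div_pos hπ hv0
  have hπ3 : π / 3 ≤ π := by linarith
  have hclow : (1:ℝ)/2 ≤ c := by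
    have := Real.cos_le_cos_of_nonneg_of_le_pi (le_of_lt hu1) hπ3 hcu
    rw [Real.cos_pi_div_three] at this
    exact this
  have hdlow : (1:ℝ)/2 ≤ d := by
    have := Real.cos_le_cos_of_nonneg_of_le_pi (le_of_lt hv1) hπ3 hcv
    rw [Real.cos_pi_div_three] at this
    exact this
  have hchi : c < 1 := by
    have h1 := Real.cos_lt_cos_of_nonneg_of_le_pi (le_refl 0) (by linarith : π / u ≤ π) hu1
    simpa using h1
  have hdhi : d < 1 := by
    have h1 := Real.cos_lt_cos_of_nonneg_of_le_pi (le_refl 0) (by linarith : π / v ≤ π) hv1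
    simpa using h1
  have hc2 : c^2 < 1 := by nlinarith
  -- sign facts
  have hfac : D = (1 - c^2 - d) * (1 - c^2 + d) := by rw [hDdef]; ring
  have hpos2 : 0 < 1 - c^2 + d := by nlinarith
  have hneg1 : 1 - c^2 - d < 0 := by
    by_contra h
    push_neg at h
    nlinarith
  have hDinv : D⁻¹ < 0 := inv_lt_zero.mpr hDlt
  have hsum : CSinv u v w 0 0 + CSinv u v w 0 3 = D⁻¹ * ((1 - d) * (1 + d - c^2)) := by
    rw [h00, h03]; ring
  have hsumneg : 2 * (CSinv u v w 0 0 + CSinv u v w 0 3) < 0 := by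
    rw [hsum]
    have h1 : 0 < (1 - d) * (1 + d - c^2) := by nlinarith
    nlinarith
  -- bilinear computations
  have hfb : Bf f b0 = 1 := by
    rw [hf, hb0]
    simp only [map_add, map_sub, _root_.map_smul, LinearMap.add_apply, LinearMap.sub_apply,
      LinearMap.smul_apply, smul_eq_mul, hGram]
    rw [h00, h01, h30, h31]
    field_simp
    rw [hDdef]; ring
  have hbb : Bf b0 b0 = 1 := by
    rw [hb0]
    simp only [map_add, map_sub, _root_.map_smul, LinearMap.add_apply, LinearMap.sub_apply,
      LinearMap.smul_apply, smul_eq_mul, hGram]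
    rw [h00, h01, h11]
    have h10 : CSinv u v w 1 0 = D⁻¹ * (c * (1 - c^2)) := by rw [hinv]; simp
    rw [h10]
    field_simp
    rw [hDdef]; ring
  have hff : Bf f f = 2 * (CSinv u v w 0 0 + CSinv u v w 0 3) := by
    rw [hf]
    simp only [map_add, LinearMap.add_apply, hGram]
    rw [h00, h03, h30, h33]
    ring
  refine ⟨hfb, hbb, hff, hsumneg, ?_⟩
  have hs2 : sin (π/u) ^ 2 = 1 - c^2 := by rw [hc]; exact Real.sin_sq _
  have h1d : (1:ℝ) - d ≠ 0 := by linarith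
  have h2 : (1 + d - c^2) ≠ 0 := ne_of_gt (by nlinarith)
  have hD0' : (1-c^2)^2 - d^2 ≠ 0 := by rw [← hDdef]; exact hD0
  have hgoal := auxId c d h1d h2 hD0'
  rw [hs2, hsum, hDdef]
  exact hgoal
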